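/- For constants γ > 0, c > 0, β ∈ (0,1], σ²_{n,j} = 2^{j/k_n}, k_n = c·n, and user index j = β·k_n, the message length C_{βk_n}(n) = (n/2)·log₂(1 + (γ/k_n)/(2^{β} + (βk_n − 1)γ/k_n)) converges as n → ∞ to γ·log₂(e)/(2c(2^{β} + βγ)). -/

import Mathlib

open Filter Real

/-- For a user index scaling linearly, `j = β k_n` with `β ∈ (0,1]` and `k_n = c n`,
the message length
`C_{βk_n}(n) = (n/2) log₂(1 + (γ/k_n)/(2^β + (βk_n − 1)γ/k_n))`
converges to `γ log₂(e)/(2c(2^β + βγ))` as `n → ∞`. -/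
theorem gaussian_many_broadcast_linear_user_limit (γ c β : ℝ) (hγ : 0 < γ) (hc : 0 < c)
    (hβ : β ∈ Set.Ioc (0 : ℝ) 1) :
    Tendsto (fun n : ℕ => (n : ℝ) / 2 *
        Real.logb 2 (1 + (γ / (c * n)) /
          ((2 : ℝ) ^ β + (β * (c * n) - 1) * γ / (c * n))))
      atTop (nhds (γ * Real.logb 2 (Real.exp 1) / (2 * c * ((2 : ℝ) ^ β + β * γ)))) := by
  obtain ⟨hβ0, hβ1⟩ := hβ
  have h2β : (0:ℝ) < (2:ℝ)^β := Real.rpow_pos_of_pos two_pos β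
  set A : ℝ := (2:ℝ)^β + β*γ with hA
  have hA0 : 0 < A := by positivity
  set x : ℕ → ℝ := fun n => (γ / (c*n)) / ((2:ℝ)^β + (β*(c*n)-1)*γ/(c*n)) with hx
  set D : ℕ → ℝ := fun n => (2:ℝ)^β + (β*(c*n)-1)*γ/(c*n) with hDdef
  have hdiv : Tendsto (fun n : ℕ => γ / (c*n)) atTop (nhds 0) := by
    have := tendsto_const_div_atTop_nhds_zero_nat (γ/c)
    simpa [div_div] using this
  have hDeq : ∀ᶠ n : ℕ in atTop, D n = A - γ/(c*n) := by
    filter_upwards [eventually_gt_atTop 0] with n hn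
    have hn' : (0:ℝ) < (n:ℝ) := by exact_mod_cast hn
    have hcn : c*(n:ℝ) ≠ 0 := by positivity
    simp only [hDdef, hA]
    field_simp
    ring
  have hD : Tendsto D atTop (nhds A) := by
    refine Tendsto.congr' (hDeq.mono fun n hn => hn.symm) ?_
    simpa using tendsto_const_nhds.sub hdiv
  have hDpos : ∀ᶠ n : ℕ in atTop, 0 < D n := hD.eventually (eventually_gt_nhds hA0)
  have hx0 : Tendsto x atTop (nhds 0) := by
    have h := hdiv.div hD hA0.ne'
    rw [zero_div] at h
    exact h
  have hxpos : ∀ᶠ n : ℕ in atTop, 0 < x n := by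
    filter_upwards [hDpos, eventually_gt_atTop 0] with n hDn hn
    have hn' : (0:ℝ) < (n:ℝ) := by exact_mod_cast hn
    have : 0 < γ/(c*n) := by positivity
    exact div_pos this hDn
  have hnx : Tendsto (fun n : ℕ => (n:ℝ) * x n) atTop (nhds ((γ/c)/A)) := by
    have h1 : Tendsto (fun n : ℕ => (γ/c) / D n) atTop (nhds ((γ/c)/A)) :=
      tendsto_const_nhds.div hD hA0.ne'
    refine Tendsto.congr' ?_ h1
    filter_upwards [eventually_gt_atTop 0] with n hn
    have hn' : (0:ℝ) < (n:ℝ) := by exact_mod_cast hn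
    have hcn : c*(n:ℝ) ≠ 0 := by positivity
    show (γ/c) / D n = (n:ℝ) * x n
    have hne : (n:ℝ) * (γ/(c*n)) = γ/c := by field_simp
    show (γ/c) / D n = (n:ℝ) * ((γ/(c*n)) / D n)
    rw [← mul_div_assoc, hne]
  -- log(1+t)/t → 1 as t → 0, t ≠ 0
  have hderiv : HasDerivAt (fun t : ℝ => Real.log (1+t)) 1 0 := by
    have h1 : HasDerivAt (fun t : ℝ => (1:ℝ)+t) 1 0 := (hasDerivAt_id 0).const_add 1
    have h2 := (Real.hasDerivAt_log (by norm_num : (1:ℝ)+0 ≠ 0)).comp 0 h1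
    simpa [Function.comp_def] using h2
  have hslope : Tendsto (fun t : ℝ => Real.log (1+t) / t) (nhdsWithin 0 {0}ᶜ) (nhds 1) := by
    have := hasDerivAt_iff_tendsto_slope.mp hderiv
    refine this.congr' ?_
    filter_upwards [self_mem_nhdsWithin] with t ht
    simp [slope_def_field, div_eq_div_iff]
  have hxw : Tendsto x atTop (nhdsWithin 0 {0}ᶜ) := by
    rw [tendsto_nhdsWithin_iff]
    refine ⟨hx0, ?_⟩
    filter_upwards [hxpos] with n hn
    exact ne_of_gt hn
  have hratio : Tendsto (fun n : ℕ => Real.log (1 + x n) / x n) atTop (nhds 1) :=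
    hslope.comp hxw
  have hnlog : Tendsto (fun n : ℕ => (n:ℝ) * Real.log (1 + x n)) atTop (nhds ((γ/c)/A)) := by
    have h1 := hnx.mul hratio
    rw [mul_one] at h1
    refine Tendsto.congr' ?_ h1
    filter_upwards [hxpos] with n hn
    field_simp
  have hlog2 : Real.log 2 ≠ 0 := (Real.log_pos (by norm_num)).ne'
  have hfinal := hnlog.mul (tendsto_const_nhds (x := 1/(2*Real.log 2)) (f := atTop (α := ℕ)))
  have hval : γ * Real.logb 2 (Real.exp 1) / (2*c*A) = (γ/c/A) * (1/(2*Real.log 2)) := by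
    rw [Real.logb, Real.log_exp]
    field_simp
  rw [hval]
  refine Tendsto.congr' ?_ hfinal
  filter_upwards with n
  show (n:ℝ) * Real.log (1 + x n) * (1/(2*Real.log 2)) = (n:ℝ)/2 * Real.logb 2 (1 + x n)
  rw [Real.logb]
  field_simp
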